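/- Let n ≥ 3, let ℓ > 0 and α ≥ (n−2)ℓ, and set S = αIₙ + ℓ𝟙ₙ𝟙ₙᵀ. Let P be a nonzero n×n real symmetric diagonally dominant matrix with nonnegative entries, set Q = S⁻¹ P S⁻¹ and ξ = min_{1≤i≤n} (Q_{ii} − Σ_{j≠i} Q_{ij}), and define g(t) = ‖S⁻¹ − t·S⁻¹PS⁻¹‖∞ for t ≥ 0. Then ξ > 0 and there exists ε > 0 such that g(t) = ‖S⁻¹‖∞ − ξt for all t ∈ [0, ε]; in particular g is right-differentiable at 0 with g'(0) = −ξ < 0. -/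

import Mathlib

open Matrix

/-- The maximum absolute row sum norm of a matrix. -/
noncomputable def infNorm {n : ℕ} (A : Matrix (Fin n) (Fin n) ℝ) : ℝ :=
  ⨆ i, ∑ j, |A i j|

set_option maxHeartbeats 1000000 in
theorem linear_part_norm_decreasing
    (n : ℕ) (hn : 3 ≤ n) (ℓ α : ℝ) (hℓ : 0 < ℓ) (hα : ((n : ℝ) - 2) * ℓ ≤ α)
    (S : Matrix (Fin n) (Fin n) ℝ)
    (hS : S = α • (1 : Matrix (Fin n) (Fin n) ℝ) +
      ℓ • Matrix.of (fun _ _ => (1 : ℝ)))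
    (P : Matrix (Fin n) (Fin n) ℝ) (hP0 : P ≠ 0) (hPsym : P.IsSymm)
    (hPpos : ∀ i j, 0 ≤ P i j)
    (hPdd : ∀ i, ∑ j ∈ Finset.univ.erase i, |P i j| ≤ |P i i|)
    (Q : Matrix (Fin n) (Fin n) ℝ) (hQ : Q = S⁻¹ * P * S⁻¹)
    (ξ : ℝ) (hξ : ξ = ⨅ i, (Q i i - ∑ j ∈ Finset.univ.erase i, Q i j))
    (g : ℝ → ℝ) (hg : ∀ t, g t = infNorm (S⁻¹ - t • Q)) :
    0 < ξ ∧
    (∃ ε > 0, ∀ t, 0 ≤ t → t ≤ ε → g t = infNorm S⁻¹ - ξ * t) ∧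
    HasDerivWithinAt g (-ξ) (Set.Ici 0) 0 := by
  have hn0 : 0 < n := by omega
  haveI : Nonempty (Fin n) := ⟨⟨0, hn0⟩⟩
  have hn3 : (3:ℝ) ≤ (n:ℝ) := by exact_mod_cast hn
  have hα0 : 0 < α := lt_of_lt_of_le (by nlinarith) hα
  set β := α + n * ℓ with hβdef
  have hβ0 : 0 < β := by positivity
  set u := α⁻¹ with hudef
  set b := ℓ / (α * β) with hbdef
  have hu0 : 0 < u := by positivity
  have hb0 : 0 < b := by positivity
  set E : Matrix (Fin n) (Fin n) ℝ := Matrix.of (fun _ _ => (1:ℝ)) with hEdef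
  set M : Matrix (Fin n) (Fin n) ℝ := u • (1 : Matrix (Fin n) (Fin n) ℝ) - b • E with hMdef
  have hAB : 0 < α * β := by positivity
  have hbα : b * (α * β) = ℓ := by rw [hbdef]; field_simp
  have huα : u * (α * β) = β := by rw [hudef]; field_simp
  -- u - b > 0
  have hub : b < u := by
    rw [← mul_lt_mul_iff_of_pos_right hAB, hbα, huα, hβdef]
    nlinarith
  -- scalar inequalities
  have hc1 : ((n:ℝ) - 2) * b < u := by
    rw [← mul_lt_mul_iff_of_pos_right hAB,
      show (((n:ℝ)-2)*b)*(α*β) = ((n:ℝ)-2)*(b*(α*β)) by ring, hbα, huα, hβdef]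
    nlinarith
  have hc2 : 3 * (((n:ℝ) - 2) * b) < (2 * (n:ℝ) - 5) * u := by
    rw [← mul_lt_mul_iff_of_pos_right hAB,
      show (3*(((n:ℝ)-2)*b))*(α*β) = 3*((n:ℝ)-2)*(b*(α*β)) by ring,
      show ((2*(n:ℝ)-5)*u)*(α*β) = (2*(n:ℝ)-5)*(u*(α*β)) by ring, hbα, huα, hβdef]
    nlinarith [mul_le_mul_of_nonneg_left hα (by linarith : (0:ℝ) ≤ 2*(n:ℝ)-5),
      mul_nonneg hℓ.le (sq_nonneg ((n:ℝ)-3)),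
      mul_nonneg hℓ.le (by linarith : (0:ℝ) ≤ (n:ℝ)-3)]
  -- S⁻¹ = M
  have hSM : S * M = 1 := by
    rw [hS, hMdef, hEdef]
    ext i j
    simp only [Matrix.mul_apply, Matrix.add_apply, Matrix.sub_apply, Matrix.smul_apply,
      Matrix.one_apply, Matrix.of_apply, smul_eq_mul, mul_ite, ite_mul, mul_one, mul_zero,
      zero_mul, add_mul, mul_sub, sub_mul]
    simp only [Finset.sum_sub_distrib, Finset.sum_add_distrib, Finset.sum_ite_eq,
      Finset.sum_ite_eq', Finset.mem_univ, if_true, Finset.sum_const, Finset.card_univ,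
      Fintype.card_fin, nsmul_eq_mul]
    have hβ' : β = α + n * ℓ := hβdef
    have hαne : α ≠ 0 := ne_of_gt hα0
    have hβne : β ≠ 0 := ne_of_gt hβ0
    rcases eq_or_ne i j with h | h <;>
      simp [h, hudef, hbdef] <;> field_simp <;> ring
  have hMinv : S⁻¹ = M := Matrix.inv_eq_right_inv hSM
  -- row and column sums against M
  have hrow : ∀ (v : Fin n → ℝ) (i : Fin n), ∑ k, M i k * v k = u * v i - b * ∑ k, v k := by
    intro v i
    rw [hMdef, hEdef]
    simp only [Matrix.sub_apply, Matrix.smul_apply, Matrix.one_apply, Matrix.of_apply,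
      smul_eq_mul, mul_one, sub_mul, mul_sub, mul_ite, ite_mul, mul_zero, zero_mul,
      Finset.sum_sub_distrib, Finset.sum_ite_eq, Finset.sum_ite_eq', Finset.mem_univ, if_true,
      Finset.mul_sum, mul_comm]
    rw [Finset.sum_mul]
  have hcol : ∀ (v : Fin n → ℝ) (j : Fin n), ∑ l, v l * M l j = u * v j - b * ∑ l, v l := by
    intro v j
    rw [hMdef, hEdef]
    simp only [Matrix.sub_apply, Matrix.smul_apply, Matrix.one_apply, Matrix.of_apply,
      smul_eq_mul, mul_one, sub_mul, mul_sub, mul_ite, ite_mul, mul_zero, zero_mul,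
      Finset.sum_sub_distrib, Finset.sum_ite_eq, Finset.sum_ite_eq', Finset.mem_univ, if_true,
      Finset.mul_sum, mul_comm]
    rw [Finset.sum_mul]
  set r : Fin n → ℝ := fun i => ∑ j, P i j with hrdef
  set T : ℝ := ∑ i, r i with hTdef
  have hPsym' : ∀ i j, P i j = P j i := fun i j => by
    conv_lhs => rw [← hPsym]
    rfl
  have hcolsum : ∀ j, ∑ k, P k j = r j := by
    intro j
    rw [hrdef]
    exact Finset.sum_congr rfl fun k _ => hPsym' k j
  -- entries of Q
  have hQe : ∀ i j, Q i j = u^2 * P i j - u*b*(r i) - u*b*(r j) + b^2*T := by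
    intro i j
    have h1 : ∀ l, (S⁻¹ * P) i l = u * P i l - b * r l := by
      intro l
      rw [hMinv, Matrix.mul_apply, hrow (fun k => P k l) i, hcolsum]
    have h2 : Q i j = ∑ l, (u * P i l - b * r l) * M l j := by
      rw [hQ, Matrix.mul_apply]
      refine Finset.sum_congr rfl fun l _ => ?_
      rw [h1 l, hMinv]
    rw [h2, hcol (fun l => u * P i l - b * r l) j]
    have h3 : ∑ l, (u * P i l - b * r l) = u * r i - b * T := by
      rw [Finset.sum_sub_distrib, ← Finset.mul_sum, ← Finset.mul_sum, ← hrdef, ← hTdef]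
    rw [h3]; ring
  -- the function f
  set f : Fin n → ℝ := fun i => Q i i - ∑ j ∈ Finset.univ.erase i, Q i j with hfdef
  have hξ' : ξ = ⨅ i, f i := hξ
  -- closed form for f
  have hfe : ∀ i, f i = 2*u^2*(P i i) - (u^2 + (4-(n:ℝ))*u*b)*(r i)
      + (b*u - ((n:ℝ)-2)*b^2)*T := by
    intro i
    have hs : ∑ j, Q i j
        = u^2 * r i - (n:ℝ)*(u*b*(r i)) - u*b*T + (n:ℝ)*(b^2*T) := by
      rw [Finset.sum_congr rfl (fun j _ => hQe i j)]
      simp only [Finset.sum_add_distrib, Finset.sum_sub_distrib, Finset.sum_const,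
        Finset.card_univ, Fintype.card_fin, nsmul_eq_mul, ← Finset.mul_sum]
      rfl
    have herase : ∑ j ∈ Finset.univ.erase i, Q i j = (∑ j, Q i j) - Q i i :=
      Finset.sum_erase_eq_sub (Finset.mem_univ i)
    have : f i = Q i i - ((∑ j, Q i j) - Q i i) := by rw [hfdef]; simp only []; rw [herase]
    rw [this, hs, hQe i i]; ring
  -- diagonal dominance facts
  have hrabs : ∀ i, ∑ j ∈ Finset.univ.erase i, P i j ≤ P i i := by
    intro i
    have h := hPdd i
    rw [Finset.sum_congr rfl (fun j _ => abs_of_nonneg (hPpos i j)),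
      abs_of_nonneg (hPpos i i)] at h
    exact h
  have hri : ∀ i, r i = P i i + ∑ j ∈ Finset.univ.erase i, P i j := by
    intro i
    rw [hrdef]
    exact (Finset.add_sum_erase _ _ (Finset.mem_univ i)).symm
  have hsum_nonneg : ∀ i, 0 ≤ ∑ j ∈ Finset.univ.erase i, P i j :=
    fun i => Finset.sum_nonneg fun j _ => hPpos i j
  have hr2P : ∀ i, r i ≤ 2 * P i i := by intro i; rw [hri i]; linarith [hrabs i]
  have hPler : ∀ i, P i i ≤ r i := by intro i; rw [hri i]; linarith [hsum_nonneg i]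
  have hr0 : ∀ i, 0 ≤ r i := fun i => le_trans (hPpos i i) (hPler i)
  have hT2 : ∀ i, 2 * r i - P i i ≤ T := by
    intro i
    have h1 : ∀ k, P k i ≤ r k := fun k =>
      Finset.single_le_sum (fun j _ => hPpos k j) (Finset.mem_univ i)
    have h2 : ∑ k ∈ Finset.univ.erase i, P k i ≤ ∑ k ∈ Finset.univ.erase i, r k :=
      Finset.sum_le_sum fun k _ => h1 k
    have h3 : ∑ k ∈ Finset.univ.erase i, P k i = r i - P i i := by
      rw [Finset.sum_erase_eq_sub (Finset.mem_univ i), hcolsum i]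
    have h4 : ∑ k ∈ Finset.univ.erase i, r k = T - r i := by
      rw [Finset.sum_erase_eq_sub (Finset.mem_univ i), ← hTdef]
    rw [h3, h4] at h2
    linarith
  have hT0 : 0 < T := by
    obtain ⟨i, j, hij⟩ : ∃ i j, P i j ≠ 0 := by
      by_contra h
      push_neg at h
      exact hP0 (by ext i j; simpa using h i j)
    have hPij : 0 < P i j := lt_of_le_of_ne (hPpos i j) (Ne.symm hij)
    have h1 : P i j ≤ r i := Finset.single_le_sum (fun k _ => hPpos i k) (Finset.mem_univ j)
    have h2 : r i ≤ T := Finset.single_le_sum (fun k _ => hr0 k) (Finset.mem_univ i)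
    linarith
  -- positivity of f
  have hK3 : 0 < b*u - ((n:ℝ)-2)*b^2 := by nlinarith [mul_pos hb0 (sub_pos.2 hc1)]
  have hfpos : ∀ i, 0 < f i := by
    intro i
    rw [hfe i]
    rcases eq_or_lt_of_le (hPpos i i) with h0 | h0
    · have hr00 : r i = 0 := le_antisymm (by have := hr2P i; rw [← h0] at this; linarith)
        (hr0 i)
      rw [← h0, hr00]
      have := mul_pos hK3 hT0
      nlinarith
    · have s1 : (b*u - ((n:ℝ)-2)*b^2) * (2*r i - P i i) ≤ (b*u - ((n:ℝ)-2)*b^2) * T :=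
        mul_le_mul_of_nonneg_left (hT2 i) hK3.le
      have hc' : 2*(b*u - ((n:ℝ)-2)*b^2) - (u^2 + (4-(n:ℝ))*u*b) ≤ 0 := by
        nlinarith [mul_lt_mul_of_pos_left hc1 hu0, mul_nonneg (mul_nonneg
          (by linarith : (0:ℝ) ≤ (n:ℝ)-2) hb0.le) hb0.le]
      have s3 : (2*(b*u - ((n:ℝ)-2)*b^2) - (u^2 + (4-(n:ℝ))*u*b)) * (2 * P i i)
          ≤ (2*(b*u - ((n:ℝ)-2)*b^2) - (u^2 + (4-(n:ℝ))*u*b)) * (r i) :=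
        mul_le_mul_of_nonpos_left (hr2P i) hc'
      have s2 : 0 < (2*(n:ℝ)-5)*u*b - 3*((n:ℝ)-2)*b^2 := by
        nlinarith [mul_pos hb0 (show (0:ℝ) < (2*(n:ℝ)-5)*u - 3*(((n:ℝ)-2)*b) by linarith)]
      linarith [s1, s3, mul_pos s2 h0]
  -- the minimizer
  obtain ⟨i0, hi0⟩ := Finite.exists_min f
  have hbddb : BddBelow (Set.range f) := (Set.finite_range f).bddBelow
  have hinf : (⨅ i, f i) = f i0 := le_antisymm (ciInf_le hbddb i0) (le_ciInf hi0)
  have hξf : ξ = f i0 := by rw [hξ', hinf]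
  have hξpos : 0 < ξ := hξf ▸ hfpos i0
  -- entries of M
  have hMii : ∀ i, M i i = u - b := by
    intro i; rw [hMdef, hEdef]; simp [Matrix.one_apply]
  have hMij : ∀ i j, i ≠ j → M i j = -b := by
    intro i j h; rw [hMdef, hEdef]; simp [Matrix.one_apply, h]
  have hcard : ∀ i : Fin n, (((Finset.univ : Finset (Fin n)).erase i).card : ℝ) = (n:ℝ) - 1 := by
    intro i
    rw [Finset.card_erase_of_mem (Finset.mem_univ i), Finset.card_univ, Fintype.card_fin]
    have : (1:ℕ) ≤ n := by omega
    push_cast [Nat.cast_sub this]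
    ring
  set m : ℝ := (u - b) + ((n:ℝ)-1)*b with hmdef
  -- row sums of M - t Q for small t
  have hrowsum : ∀ (t : ℝ), 0 ≤ t → (∀ i j, t * |Q i j| ≤ min (u-b) b) →
      ∀ i, ∑ j, |(M - t•Q) i j| = m - t * f i := by
    intro t ht hts i
    have hd : |(M - t•Q) i i| = (u - b) - t * Q i i := by
      have h1 : t * Q i i ≤ t * |Q i i| := mul_le_mul_of_nonneg_left (le_abs_self _) ht
      have h2 : t * |Q i i| ≤ min (u-b) b := hts i i
      have h3 : min (u-b) b ≤ u - b := min_le_left _ _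
      rw [Matrix.sub_apply, Matrix.smul_apply, smul_eq_mul, hMii i]
      exact abs_of_nonneg (by linarith)
    have ho : ∀ j ∈ Finset.univ.erase i, |(M - t•Q) i j| = b + t * Q i j := by
      intro j hj
      have hji : j ≠ i := Finset.ne_of_mem_erase hj
      have h1 : -(t * Q i j) ≤ t * |Q i j| := by
        have := mul_le_mul_of_nonneg_left (neg_le_abs (Q i j)) ht
        linarith
      have h2 : t * |Q i j| ≤ min (u-b) b := hts i j
      have h3 : min (u-b) b ≤ b := min_le_right _ _
      rw [Matrix.sub_apply, Matrix.smul_apply, smul_eq_mul, hMij i j (Ne.symm hji)]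
      rw [abs_of_nonpos (by linarith)]
      ring
    rw [← Finset.add_sum_erase _ _ (Finset.mem_univ i), hd, Finset.sum_congr rfl ho,
      Finset.sum_add_distrib, Finset.sum_const, ← Finset.mul_sum, nsmul_eq_mul, hcard i]
    have hfi : f i = Q i i - ∑ j ∈ Finset.univ.erase i, Q i j := by rw [hfdef]
    rw [hmdef, hfi]
    ring
  -- sup over rows
  have hnorm : ∀ (t : ℝ), 0 ≤ t → (∀ i j, t * |Q i j| ≤ min (u-b) b) →
      infNorm (M - t•Q) = m - t * f i0 := by
    intro t ht hts
    have h1 : infNorm (M - t•Q) = ⨆ i, (m - t * f i) := by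
      unfold infNorm
      exact iSup_congr (hrowsum t ht hts)
    rw [h1]
    refine le_antisymm (ciSup_le fun i => ?_) (le_ciSup (f := fun i => m - t * f i) (Set.finite_range _).bddAbove i0)
    have := mul_le_mul_of_nonneg_left (hi0 i) ht
    linarith
  -- choice of ε
  set C : ℝ := ∑ i, ∑ j, |Q i j| with hCdef
  have hQC : ∀ i j, |Q i j| ≤ C := by
    intro i j
    have h1 : |Q i j| ≤ ∑ j', |Q i j'| :=
      Finset.single_le_sum (f := fun k => |Q i k|) (fun k _ => abs_nonneg _) (Finset.mem_univ j)
    have h2 : ∑ j', |Q i j'| ≤ C := by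
      rw [hCdef]
      exact Finset.single_le_sum (f := fun k => ∑ l, |Q k l|)
        (fun k _ => Finset.sum_nonneg fun l _ => abs_nonneg _) (Finset.mem_univ i)
    linarith
  have hC0 : 0 ≤ C := le_trans (abs_nonneg _) (hQC i0 i0)
  have hmin0 : 0 < min (u-b) b := lt_min (by linarith) hb0
  set ε : ℝ := min (u-b) b / (C+1) with hεdef
  have hε0 : 0 < ε := div_pos hmin0 (by linarith)
  have hεC : ε * (C+1) = min (u-b) b := by rw [hεdef]; field_simp
  have hbound : ∀ t, 0 ≤ t → t ≤ ε → ∀ i j, t * |Q i j| ≤ min (u-b) b := by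
    intro t ht htε i j
    have h1 : t * |Q i j| ≤ ε * C :=
      mul_le_mul htε (hQC i j) (abs_nonneg _) hε0.le
    nlinarith
  have hzero : ∀ i j, (0:ℝ) * |Q i j| ≤ min (u-b) b := by
    intro i j; rw [zero_mul]; exact hmin0.le
  have hM0 : infNorm M = m := by
    have h := hnorm 0 le_rfl hzero
    simpa using h
  have hgf : ∀ t, 0 ≤ t → t ≤ ε → g t = infNorm S⁻¹ - ξ * t := by
    intro t ht htε
    rw [hg t, hMinv, hnorm t ht (hbound t ht htε), hM0, hξf]
    ring
  refine ⟨hξpos, ⟨ε, hε0, hgf⟩, ?_⟩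
  -- derivative
  have hlin : HasDerivWithinAt (fun s : ℝ => infNorm S⁻¹ - ξ * s) (-ξ) (Set.Ici 0) 0 := by
    have h : HasDerivAt (fun s : ℝ => infNorm S⁻¹ - ξ * s) (-ξ) 0 := by
      simpa using (((hasDerivAt_id (0:ℝ)).const_mul ξ).const_sub (infNorm S⁻¹))
    exact h.hasDerivWithinAt
  have hmem : Set.Icc (0:ℝ) ε ∈ nhdsWithin (0:ℝ) (Set.Ici 0) :=
    Icc_mem_nhdsGE_of_mem ⟨le_rfl, hε0⟩
  have heq : g =ᶠ[nhdsWithin (0:ℝ) (Set.Ici 0)] (fun s : ℝ => infNorm S⁻¹ - ξ * s) := by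
    filter_upwards [hmem] with t htmem
    exact hgf t htmem.1 htmem.2
  have hg0 : g 0 = infNorm S⁻¹ - ξ * 0 := hgf 0 le_rfl hε0.le
  exact hlin.congr_of_eventuallyEq heq hg0
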